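/- arXiv:1407.7266 — 2 statements merged into one kernel-verified Lean document; each statement's English description precedes it below -/
import Mathlib

section
/- Let q1, q2 : ℝ × ℝ → ℂ be twice continuously differentiable. For λ ∈ ℂ define the 3×3 complex matrix-valued functions U(λ) = i·λ·J + Q and V(λ) = 2i·λ²·J + 2λ·Q + i·J·(Q² − Qₓ), where Qₓ denotes the entrywise partial derivative of Q with respect to x. Then the zero-curvature identity ∂U(λ)/∂t − ∂V(λ)/∂x + U(λ)·V(λ) − V(λ)·U(λ) = 0 holds for all λ ∈ ℂ and all (x,t) ∈ ℝ² if and only if (q1, q2) solves the Manakov system. -/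
open Complex Matrix

noncomputable section

/-- The Manakov system for `q1 q2 : ℝ × ℝ → ℂ`. -/
def Manakov (q1 q2 : ℝ × ℝ → ℂ) : Prop :=
  (∀ x t : ℝ,
    Complex.I * deriv (fun t' => q1 (x, t')) t
      + deriv (fun x' => deriv (fun x'' => q1 (x'', t)) x') x
      + 2 * ((‖q1 (x, t)‖ : ℂ) ^ 2 + (‖q2 (x, t)‖ : ℂ) ^ 2) * q1 (x, t) = 0) ∧
  (∀ x t : ℝ,
    Complex.I * deriv (fun t' => q2 (x, t')) t
      + deriv (fun x' => deriv (fun x'' => q2 (x'', t)) x') x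
      + 2 * ((‖q1 (x, t)‖ : ℂ) ^ 2 + (‖q2 (x, t)‖ : ℂ) ^ 2) * q2 (x, t) = 0)

/-- The constant matrix `J = diag(−1, 1, 1)`. -/
def Jmat : Matrix (Fin 3) (Fin 3) ℂ := Matrix.diagonal ![-1, 1, 1]

/-- The potential matrix `Q` with rows `(0, q1, q2)`, `(−q1*, 0, 0)`, `(−q2*, 0, 0)`. -/
def Qmat (q1 q2 : ℝ × ℝ → ℂ) (p : ℝ × ℝ) : Matrix (Fin 3) (Fin 3) ℂ :=
  !![0, q1 p, q2 p;
     -(starRingEnd ℂ) (q1 p), 0, 0;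
     -(starRingEnd ℂ) (q2 p), 0, 0]

/-- `Qₓ`: the entrywise partial derivative of `Q` with respect to `x`. -/
def Qxmat (q1 q2 : ℝ × ℝ → ℂ) (p : ℝ × ℝ) : Matrix (Fin 3) (Fin 3) ℂ :=
  Matrix.of fun i j => deriv (fun x' => Qmat q1 q2 (x', p.2) i j) p.1

/-- `U(λ) = i·λ·J + Q`. -/
def Umat (q1 q2 : ℝ × ℝ → ℂ) (lam : ℂ) (p : ℝ × ℝ) : Matrix (Fin 3) (Fin 3) ℂ :=
  (Complex.I * lam) • Jmat + Qmat q1 q2 p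

/-- `V(λ) = 2i·λ²·J + 2λ·Q + i·J·(Q² − Qₓ)`. -/
def Vmat (q1 q2 : ℝ × ℝ → ℂ) (lam : ℂ) (p : ℝ × ℝ) : Matrix (Fin 3) (Fin 3) ℂ :=
  (2 * Complex.I * lam ^ 2) • Jmat + (2 * lam) • Qmat q1 q2 p
    + Complex.I • (Jmat * (Qmat q1 q2 p * Qmat q1 q2 p - Qxmat q1 q2 p))

namespace ZCaux

/-- first `x`-partial -/
def dX (f : ℝ × ℝ → ℂ) (x t : ℝ) : ℂ := deriv (fun x' => f (x', t)) x
/-- second `x`-partial -/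
def dXX (f : ℝ × ℝ → ℂ) (x t : ℝ) : ℂ := deriv (fun x' => deriv (fun x'' => f (x'', t)) x') x
/-- first `t`-partial -/
def dT (f : ℝ × ℝ → ℂ) (x t : ℝ) : ℂ := deriv (fun t' => f (x, t')) t

lemma hasDerivAt_conj {f : ℝ → ℂ} {f' : ℂ} {x : ℝ} (hf : HasDerivAt f f' x) :
    HasDerivAt (fun y => (starRingEnd ℂ) (f y)) ((starRingEnd ℂ) f') x := by
  simpa [Function.comp_def] using (Complex.conjCLE.toContinuousLinearMap.hasFDerivAt.comp_hasDerivAt x hf)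

lemma sliceC2 {f : ℝ × ℝ → ℂ} (hf : ContDiff ℝ 2 f) (t : ℝ) :
    ContDiff ℝ 2 (fun x => f (x, t)) := hf.comp (contDiff_id.prodMk contDiff_const)

lemma hasDX {f : ℝ × ℝ → ℂ} (hf : ContDiff ℝ 2 f) (t x : ℝ) :
    HasDerivAt (fun x' => f (x', t)) (dX f x t) x :=
  (((sliceC2 hf t).differentiable two_ne_zero) x).hasDerivAt

lemma hasDXX {f : ℝ × ℝ → ℂ} (hf : ContDiff ℝ 2 f) (t x : ℝ) :
    HasDerivAt (fun x' => deriv (fun x'' => f (x'', t)) x') (dXX f x t) x := by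
  have hg : ContDiff ℝ (1 + 1 : ℕ) (fun x' => f (x', t)) := by exact_mod_cast sliceC2 hf t
  have hd : Differentiable ℝ (deriv (fun x' => f (x', t))) :=
    ((contDiff_succ_iff_deriv (n := 1)).mp (by exact_mod_cast hg)).2.2.differentiable one_ne_zero
  exact (hd x).hasDerivAt

lemma hasDT {f : ℝ × ℝ → ℂ} (hf : ContDiff ℝ 2 f) (x t : ℝ) :
    HasDerivAt (fun t' => f (x, t')) (dT f x t) t :=
  (((hf.comp (contDiff_const.prodMk contDiff_id)).differentiable two_ne_zero) t).hasDerivAt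

lemma derivNegConj {f : ℝ × ℝ → ℂ} (hf : ContDiff ℝ 2 f) (t : ℝ) (x' : ℝ) :
    deriv (fun x'' => -(starRingEnd ℂ) (f (x'', t))) x'
      = -((starRingEnd ℂ) (deriv (fun x'' => f (x'', t)) x')) :=
  ((hasDerivAt_conj (hasDX hf t x')).neg).deriv

/-- The residual matrix `F = Q_t − W_x + [Q,W]`. -/
def Fmat (q1 q2 : ℝ × ℝ → ℂ) (x t : ℝ) : Matrix (Fin 3) (Fin 3) ℂ :=
  !![0,
     dT q1 x t - Complex.I * dXX q1 x t
       - 2 * Complex.I * (q1 (x,t) * (starRingEnd ℂ) (q1 (x,t))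
           + q2 (x,t) * (starRingEnd ℂ) (q2 (x,t))) * q1 (x,t),
     dT q2 x t - Complex.I * dXX q2 x t
       - 2 * Complex.I * (q1 (x,t) * (starRingEnd ℂ) (q1 (x,t))
           + q2 (x,t) * (starRingEnd ℂ) (q2 (x,t))) * q2 (x,t);
     -((starRingEnd ℂ) (dT q1 x t)) - Complex.I * (starRingEnd ℂ) (dXX q1 x t)
       - 2 * Complex.I * ((starRingEnd ℂ) (q1 (x,t))) * (q1 (x,t) * (starRingEnd ℂ) (q1 (x,t))
           + q2 (x,t) * (starRingEnd ℂ) (q2 (x,t))),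
     0, 0;
     -((starRingEnd ℂ) (dT q2 x t)) - Complex.I * (starRingEnd ℂ) (dXX q2 x t)
       - 2 * Complex.I * ((starRingEnd ℂ) (q2 (x,t))) * (q1 (x,t) * (starRingEnd ℂ) (q1 (x,t))
           + q2 (x,t) * (starRingEnd ℂ) (q2 (x,t))),
     0, 0]

variable {q1 q2 : ℝ × ℝ → ℂ}

lemma Ueq (q1 q2 : ℝ × ℝ → ℂ) (lam : ℂ) (x t : ℝ) :
    Umat q1 q2 lam (x, t)
      = !![-(Complex.I * lam), q1 (x,t), q2 (x,t);
           -((starRingEnd ℂ) (q1 (x,t))), Complex.I * lam, 0;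
           -((starRingEnd ℂ) (q2 (x,t))), 0, Complex.I * lam] := by
  ext i j
  fin_cases i <;> fin_cases j <;>
    simp [Umat, Qmat, Jmat, Matrix.diagonal, Matrix.vecHead, Matrix.vecTail]

set_option maxHeartbeats 1000000 in
lemma Veq (h1 : ContDiff ℝ 2 q1) (h2 : ContDiff ℝ 2 q2) (lam : ℂ) (x t : ℝ) :
    Vmat q1 q2 lam (x, t)
      = !![-(2*Complex.I*lam^2) + Complex.I * (q1 (x,t) * (starRingEnd ℂ) (q1 (x,t))
              + q2 (x,t) * (starRingEnd ℂ) (q2 (x,t))),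
           2*lam*q1 (x,t) + Complex.I * dX q1 x t,
           2*lam*q2 (x,t) + Complex.I * dX q2 x t;
           -(2*lam*(starRingEnd ℂ) (q1 (x,t))) + Complex.I * (starRingEnd ℂ) (dX q1 x t),
           2*Complex.I*lam^2 - Complex.I * ((starRingEnd ℂ) (q1 (x,t)) * q1 (x,t)),
           -(Complex.I * ((starRingEnd ℂ) (q1 (x,t)) * q2 (x,t)));
           -(2*lam*(starRingEnd ℂ) (q2 (x,t))) + Complex.I * (starRingEnd ℂ) (dX q2 x t),
           -(Complex.I * ((starRingEnd ℂ) (q2 (x,t)) * q1 (x,t))),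
           2*Complex.I*lam^2 - Complex.I * ((starRingEnd ℂ) (q2 (x,t)) * q2 (x,t))] := by
  ext i j
  fin_cases i <;> fin_cases j <;>
    simp [Vmat, Jmat, Qmat, Qxmat, dX, Matrix.mul_apply, Fin.sum_univ_three, Matrix.diagonal,
      Matrix.vecHead, Matrix.vecTail, derivNegConj h1 t, derivNegConj h2 t] <;>
    ring


lemma Ut_eq (h1 : ContDiff ℝ 2 q1) (h2 : ContDiff ℝ 2 q2) (lam : ℂ) (x t : ℝ) (i j : Fin 3) :
    deriv (fun t' => Umat q1 q2 lam (x, t') i j) t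
      = !![0, dT q1 x t, dT q2 x t;
           -((starRingEnd ℂ) (dT q1 x t)), 0, 0;
           -((starRingEnd ℂ) (dT q2 x t)), 0, 0] i j := by
  have key : ∀ i j, (fun t' => Umat q1 q2 lam (x, t') i j)
      = fun t' => (!![-(Complex.I * lam), q1 (x,t'), q2 (x,t');
           -((starRingEnd ℂ) (q1 (x,t'))), Complex.I * lam, 0;
           -((starRingEnd ℂ) (q2 (x,t'))), 0, Complex.I * lam] : Matrix (Fin 3) (Fin 3) ℂ) i j := by
    intro i j; funext t'; rw [Ueq q1 q2 lam x t']
  fin_cases i <;> fin_cases j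
  · show deriv (fun t' => Umat q1 q2 lam (x, t') 0 0) t = 0
    rw [key 0 0]; simp
  · show deriv (fun t' => Umat q1 q2 lam (x, t') 0 1) t = dT q1 x t
    rw [key 0 1]; simpa using (hasDT h1 x t).deriv
  · show deriv (fun t' => Umat q1 q2 lam (x, t') 0 2) t = dT q2 x t
    rw [key 0 2]; simpa using (hasDT h2 x t).deriv
  · show deriv (fun t' => Umat q1 q2 lam (x, t') 1 0) t = -((starRingEnd ℂ) (dT q1 x t))
    rw [key 1 0]; simpa using ((hasDerivAt_conj (hasDT h1 x t)).neg).deriv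
  · show deriv (fun t' => Umat q1 q2 lam (x, t') 1 1) t = 0
    rw [key 1 1]; simp
  · show deriv (fun t' => Umat q1 q2 lam (x, t') 1 2) t = 0
    rw [key 1 2]; simp
  · show deriv (fun t' => Umat q1 q2 lam (x, t') 2 0) t = -((starRingEnd ℂ) (dT q2 x t))
    rw [key 2 0]; simpa using ((hasDerivAt_conj (hasDT h2 x t)).neg).deriv
  · show deriv (fun t' => Umat q1 q2 lam (x, t') 2 1) t = 0
    rw [key 2 1]; simp
  · show deriv (fun t' => Umat q1 q2 lam (x, t') 2 2) t = 0
    rw [key 2 2]; simp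

set_option maxHeartbeats 1000000 in
lemma Vx_eq (h1 : ContDiff ℝ 2 q1) (h2 : ContDiff ℝ 2 q2) (lam : ℂ) (x t : ℝ) (i j : Fin 3) :
    deriv (fun x' => Vmat q1 q2 lam (x', t) i j) x
      = !![Complex.I * (dX q1 x t * (starRingEnd ℂ) (q1 (x,t)) + q1 (x,t) * (starRingEnd ℂ) (dX q1 x t)
              + (dX q2 x t * (starRingEnd ℂ) (q2 (x,t)) + q2 (x,t) * (starRingEnd ℂ) (dX q2 x t))),
           2*lam*dX q1 x t + Complex.I * dXX q1 x t,
           2*lam*dX q2 x t + Complex.I * dXX q2 x t;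
           -(2*lam*(starRingEnd ℂ) (dX q1 x t)) + Complex.I * (starRingEnd ℂ) (dXX q1 x t),
           -(Complex.I * ((starRingEnd ℂ) (dX q1 x t) * q1 (x,t) + (starRingEnd ℂ) (q1 (x,t)) * dX q1 x t)),
           -(Complex.I * ((starRingEnd ℂ) (dX q1 x t) * q2 (x,t) + (starRingEnd ℂ) (q1 (x,t)) * dX q2 x t));
           -(2*lam*(starRingEnd ℂ) (dX q2 x t)) + Complex.I * (starRingEnd ℂ) (dXX q2 x t),
           -(Complex.I * ((starRingEnd ℂ) (dX q2 x t) * q1 (x,t) + (starRingEnd ℂ) (q2 (x,t)) * dX q1 x t)),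
           -(Complex.I * ((starRingEnd ℂ) (dX q2 x t) * q2 (x,t) + (starRingEnd ℂ) (q2 (x,t)) * dX q2 x t))] i j := by
  have hg1 := hasDX h1 t x
  have hg2 := hasDX h2 t x
  have hdd1 := hasDXX h1 t x
  have hdd2 := hasDXX h2 t x
  have hc1 : HasDerivAt (fun x' => (starRingEnd ℂ) (q1 (x', t))) ((starRingEnd ℂ) (dX q1 x t)) x :=
    hasDerivAt_conj hg1
  have hc2 : HasDerivAt (fun x' => (starRingEnd ℂ) (q2 (x', t))) ((starRingEnd ℂ) (dX q2 x t)) x :=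
    hasDerivAt_conj hg2
  have hcd1 : HasDerivAt (fun x' => (starRingEnd ℂ) (deriv (fun x'' => q1 (x'', t)) x'))
      ((starRingEnd ℂ) (dXX q1 x t)) x := hasDerivAt_conj hdd1
  have hcd2 : HasDerivAt (fun x' => (starRingEnd ℂ) (deriv (fun x'' => q2 (x'', t)) x'))
      ((starRingEnd ℂ) (dXX q2 x t)) x := hasDerivAt_conj hdd2
  have key : ∀ i j, (fun x' => Vmat q1 q2 lam (x', t) i j)
      = fun x' => (!![-(2*Complex.I*lam^2) + Complex.I * (q1 (x',t) * (starRingEnd ℂ) (q1 (x',t))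
              + q2 (x',t) * (starRingEnd ℂ) (q2 (x',t))),
           2*lam*q1 (x',t) + Complex.I * dX q1 x' t,
           2*lam*q2 (x',t) + Complex.I * dX q2 x' t;
           -(2*lam*(starRingEnd ℂ) (q1 (x',t))) + Complex.I * (starRingEnd ℂ) (dX q1 x' t),
           2*Complex.I*lam^2 - Complex.I * ((starRingEnd ℂ) (q1 (x',t)) * q1 (x',t)),
           -(Complex.I * ((starRingEnd ℂ) (q1 (x',t)) * q2 (x',t)));
           -(2*lam*(starRingEnd ℂ) (q2 (x',t))) + Complex.I * (starRingEnd ℂ) (dX q2 x' t),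
           -(Complex.I * ((starRingEnd ℂ) (q2 (x',t)) * q1 (x',t))),
           2*Complex.I*lam^2 - Complex.I * ((starRingEnd ℂ) (q2 (x',t)) * q2 (x',t))] : Matrix (Fin 3) (Fin 3) ℂ) i j := by
    intro i j; funext x'; rw [Veq h1 h2 lam x' t]
  fin_cases i <;> fin_cases j
  · show deriv (fun x' => Vmat q1 q2 lam (x', t) 0 0) x = _
    rw [key 0 0]
    have hD : HasDerivAt (fun x' => -(2*Complex.I*lam^2) + Complex.I * (q1 (x',t) * (starRingEnd ℂ) (q1 (x',t))
        + q2 (x',t) * (starRingEnd ℂ) (q2 (x',t))))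
        (Complex.I * (dX q1 x t * (starRingEnd ℂ) (q1 (x,t)) + q1 (x,t) * (starRingEnd ℂ) (dX q1 x t)
          + (dX q2 x t * (starRingEnd ℂ) (q2 (x,t)) + q2 (x,t) * (starRingEnd ℂ) (dX q2 x t)))) x :=
      (((hg1.mul hc1).add (hg2.mul hc2)).const_mul _).const_add _
    simpa using hD.deriv
  · show deriv (fun x' => Vmat q1 q2 lam (x', t) 0 1) x = _
    rw [key 0 1]
    have hD : HasDerivAt (fun x' => 2*lam*q1 (x',t) + Complex.I * dX q1 x' t)
        (2*lam*dX q1 x t + Complex.I * dXX q1 x t) x := (hg1.const_mul _).add (hdd1.const_mul _)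
    simpa using hD.deriv
  · show deriv (fun x' => Vmat q1 q2 lam (x', t) 0 2) x = _
    rw [key 0 2]
    have hD : HasDerivAt (fun x' => 2*lam*q2 (x',t) + Complex.I * dX q2 x' t)
        (2*lam*dX q2 x t + Complex.I * dXX q2 x t) x := (hg2.const_mul _).add (hdd2.const_mul _)
    simpa using hD.deriv
  · show deriv (fun x' => Vmat q1 q2 lam (x', t) 1 0) x = _
    rw [key 1 0]
    have hD : HasDerivAt (fun x' => -(2*lam*(starRingEnd ℂ) (q1 (x',t))) + Complex.I * (starRingEnd ℂ) (dX q1 x' t))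
        (-(2*lam*(starRingEnd ℂ) (dX q1 x t)) + Complex.I * (starRingEnd ℂ) (dXX q1 x t)) x :=
      ((hc1.const_mul _).neg).add (hcd1.const_mul _)
    simpa using hD.deriv
  · show deriv (fun x' => Vmat q1 q2 lam (x', t) 1 1) x = _
    rw [key 1 1]
    have hD : HasDerivAt (fun x' => 2*Complex.I*lam^2 - Complex.I * ((starRingEnd ℂ) (q1 (x',t)) * q1 (x',t)))
        (-(Complex.I * ((starRingEnd ℂ) (dX q1 x t) * q1 (x,t) + (starRingEnd ℂ) (q1 (x,t)) * dX q1 x t))) x :=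
      ((hc1.mul hg1).const_mul _).const_sub _
    simpa using hD.deriv
  · show deriv (fun x' => Vmat q1 q2 lam (x', t) 1 2) x = _
    rw [key 1 2]
    have hD : HasDerivAt (fun x' => -(Complex.I * ((starRingEnd ℂ) (q1 (x',t)) * q2 (x',t))))
        (-(Complex.I * ((starRingEnd ℂ) (dX q1 x t) * q2 (x,t) + (starRingEnd ℂ) (q1 (x,t)) * dX q2 x t))) x :=
      ((hc1.mul hg2).const_mul _).neg
    simpa using hD.deriv
  · show deriv (fun x' => Vmat q1 q2 lam (x', t) 2 0) x = _
    rw [key 2 0]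
    have hD : HasDerivAt (fun x' => -(2*lam*(starRingEnd ℂ) (q2 (x',t))) + Complex.I * (starRingEnd ℂ) (dX q2 x' t))
        (-(2*lam*(starRingEnd ℂ) (dX q2 x t)) + Complex.I * (starRingEnd ℂ) (dXX q2 x t)) x :=
      ((hc2.const_mul _).neg).add (hcd2.const_mul _)
    simpa using hD.deriv
  · show deriv (fun x' => Vmat q1 q2 lam (x', t) 2 1) x = _
    rw [key 2 1]
    have hD : HasDerivAt (fun x' => -(Complex.I * ((starRingEnd ℂ) (q2 (x',t)) * q1 (x',t))))
        (-(Complex.I * ((starRingEnd ℂ) (dX q2 x t) * q1 (x,t) + (starRingEnd ℂ) (q2 (x,t)) * dX q1 x t))) x :=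
      ((hc2.mul hg1).const_mul _).neg
    simpa using hD.deriv
  · show deriv (fun x' => Vmat q1 q2 lam (x', t) 2 2) x = _
    rw [key 2 2]
    have hD : HasDerivAt (fun x' => 2*Complex.I*lam^2 - Complex.I * ((starRingEnd ℂ) (q2 (x',t)) * q2 (x',t)))
        (-(Complex.I * ((starRingEnd ℂ) (dX q2 x t) * q2 (x,t) + (starRingEnd ℂ) (q2 (x,t)) * dX q2 x t))) x :=
      ((hc2.mul hg2).const_mul _).const_sub _
    simpa using hD.deriv


set_option maxHeartbeats 2000000 in
lemma keyLem (h1 : ContDiff ℝ 2 q1) (h2 : ContDiff ℝ 2 q2) (lam : ℂ) (x t : ℝ) (i j : Fin 3) :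
    deriv (fun t' => Umat q1 q2 lam (x, t') i j) t
      - deriv (fun x' => Vmat q1 q2 lam (x', t) i j) x
      + (Umat q1 q2 lam (x, t) * Vmat q1 q2 lam (x, t)
          - Vmat q1 q2 lam (x, t) * Umat q1 q2 lam (x, t)) i j
    = Fmat q1 q2 x t i j := by
  rw [Ut_eq h1 h2 lam x t i j, Vx_eq h1 h2 lam x t i j, Ueq q1 q2 lam x t, Veq h1 h2 lam x t]
  fin_cases i <;> fin_cases j <;>
    simp [Fmat, Matrix.mul_apply, Fin.sum_univ_three, Matrix.vecHead, Matrix.vecTail,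
      -Complex.I_sq] <;>
    first
      | ring1
      | linear_combination (-2*(dX q1 x t)*lam) * Complex.I_sq
      | linear_combination (-2*(dX q2 x t)*lam) * Complex.I_sq
      | linear_combination (2*((starRingEnd ℂ) (dX q1 x t))*lam) * Complex.I_sq
      | linear_combination (2*((starRingEnd ℂ) (dX q2 x t))*lam) * Complex.I_sq
      | linear_combination (-(dX q1 x t)*lam) * Complex.I_sq
      | linear_combination (-(dX q2 x t)*lam) * Complex.I_sq
      | linear_combination ((starRingEnd ℂ) (dX q1 x t)*lam) * Complex.I_sq
      | linear_combination ((starRingEnd ℂ) (dX q2 x t)*lam) * Complex.I_sq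

lemma normsq (z : ℂ) : ((‖z‖ : ℂ)) ^ 2 = z * (starRingEnd ℂ) z := by
  rw [Complex.mul_conj]
  norm_cast
  rw [Complex.normSq_eq_norm_sq]

end ZCaux

open ZCaux in
theorem zero_curvature_iff_manakov (q1 q2 : ℝ × ℝ → ℂ)
    (h1 : ContDiff ℝ 2 q1) (h2 : ContDiff ℝ 2 q2) :
    (∀ lam : ℂ, ∀ x t : ℝ, ∀ i j : Fin 3,
      deriv (fun t' => Umat q1 q2 lam (x, t') i j) t
        - deriv (fun x' => Vmat q1 q2 lam (x', t) i j) x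
        + (Umat q1 q2 lam (x, t) * Vmat q1 q2 lam (x, t)
            - Vmat q1 q2 lam (x, t) * Umat q1 q2 lam (x, t)) i j = 0)
      ↔ Manakov q1 q2 := by
  constructor
  · intro h
    constructor
    · intro x t
      have h01 := h 0 x t 0 1
      rw [keyLem h1 h2 0 x t 0 1] at h01
      simp only [Fmat, dT, dXX, Matrix.cons_val', Matrix.cons_val_zero, Matrix.cons_val_one,
        Matrix.head_cons, Matrix.empty_val', Matrix.cons_val_fin_one, Matrix.of_apply,
        Matrix.cons_val_two, Matrix.tail_cons] at h01
      rw [normsq, normsq]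
      linear_combination Complex.I * h01
        + (deriv (fun x' => deriv (fun x'' => q1 (x'', t)) x') x
            + 2*(q1 (x,t) * (starRingEnd ℂ) (q1 (x,t))
                + q2 (x,t) * (starRingEnd ℂ) (q2 (x,t))) * q1 (x,t)) * Complex.I_sq
    · intro x t
      have h02 := h 0 x t 0 2
      rw [keyLem h1 h2 0 x t 0 2] at h02
      simp only [Fmat, dT, dXX, Matrix.cons_val', Matrix.cons_val_zero, Matrix.cons_val_one,
        Matrix.head_cons, Matrix.empty_val', Matrix.cons_val_fin_one, Matrix.of_apply,
        Matrix.cons_val_two, Matrix.tail_cons] at h02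
      rw [normsq, normsq]
      linear_combination Complex.I * h02
        + (deriv (fun x' => deriv (fun x'' => q2 (x'', t)) x') x
            + 2*(q1 (x,t) * (starRingEnd ℂ) (q1 (x,t))
                + q2 (x,t) * (starRingEnd ℂ) (q2 (x,t))) * q2 (x,t)) * Complex.I_sq
  · intro hM lam x t i j
    have m1 := hM.1 x t
    have m2 := hM.2 x t
    rw [normsq, normsq] at m1 m2
    have m1c := congrArg (starRingEnd ℂ) m1
    have m2c := congrArg (starRingEnd ℂ) m2
    simp only [map_add, _root_.map_mul, _root_.map_ofNat, Complex.conj_I, map_zero,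
      Complex.conj_conj] at m1c m2c
    rw [keyLem h1 h2 lam x t i j]
    fin_cases i <;> fin_cases j
    · show Fmat q1 q2 x t 0 0 = 0
      simp [Fmat, Matrix.vecHead, Matrix.vecTail]
    · show Fmat q1 q2 x t 0 1 = 0
      simp only [Fmat, dT, dXX, Matrix.cons_val', Matrix.cons_val_zero, Matrix.cons_val_one,
        Matrix.head_cons, Matrix.empty_val', Matrix.cons_val_fin_one, Matrix.of_apply,
        Matrix.cons_val_two, Matrix.tail_cons]
      linear_combination (-Complex.I) * m1 + (deriv (fun t' => q1 (x, t')) t) * Complex.I_sq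
    · show Fmat q1 q2 x t 0 2 = 0
      simp only [Fmat, dT, dXX, Matrix.cons_val', Matrix.cons_val_zero, Matrix.cons_val_one,
        Matrix.head_cons, Matrix.empty_val', Matrix.cons_val_fin_one, Matrix.of_apply,
        Matrix.cons_val_two, Matrix.tail_cons]
      linear_combination (-Complex.I) * m2 + (deriv (fun t' => q2 (x, t')) t) * Complex.I_sq
    · show Fmat q1 q2 x t 1 0 = 0
      simp only [Fmat, dT, dXX, Matrix.cons_val', Matrix.cons_val_zero, Matrix.cons_val_one,
        Matrix.head_cons, Matrix.empty_val', Matrix.cons_val_fin_one, Matrix.of_apply,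
        Matrix.cons_val_two, Matrix.tail_cons]
      linear_combination (-Complex.I) * m1c
        + (-(starRingEnd ℂ) (deriv (fun t' => q1 (x, t')) t)) * Complex.I_sq
    · show Fmat q1 q2 x t 1 1 = 0
      simp [Fmat, Matrix.vecHead, Matrix.vecTail]
    · show Fmat q1 q2 x t 1 2 = 0
      simp [Fmat, Matrix.vecHead, Matrix.vecTail]
    · show Fmat q1 q2 x t 2 0 = 0
      simp [Fmat, dT, dXX, Matrix.vecHead, Matrix.vecTail]
      linear_combination (-Complex.I) * m2c
        + (-(starRingEnd ℂ) (deriv (fun t' => q2 (x, t')) t)) * Complex.I_sq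
    · show Fmat q1 q2 x t 2 1 = 0
      simp [Fmat, Matrix.vecHead, Matrix.vecTail]
    · show Fmat q1 q2 x t 2 2 = 0
      simp [Fmat, Matrix.vecHead, Matrix.vecTail]
end
end

section
/- Let c1, c2 be real numbers with s := √(c1² + c2²) > 0, and set b = 2(c1² + c2²). Define L1(x,t) = x + 2i·t·s, L2(x,t) = 2i·t·s² − x·s + 1, F1 = 4·c1·s·L1·L2, G1 = 4·c2·s·L1·L2, and H1(x,t) = 8t²s⁴ + 2x²s² − 2xs + 1. Then the pair of functions q1^[1](x,t) = e^{ibt}·(c1 + F1(x,t)/H1(x,t)) and q2^[1](x,t) = e^{ibt}·(c2 + G1(x,t)/H1(x,t)) solves the Manakov system on all of ℝ². Moreover q1^[1](x,t)·c2 = q2^[1](x,t)·c1 for all (x,t). -/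
open Complex

noncomputable section

/-- `s = √(c1² + c2²)`. -/
def sval (c1 c2 : ℝ) : ℝ := Real.sqrt (c1 ^ 2 + c2 ^ 2)

/-- `L1(x,t) = x + 2i·t·s`. -/
def L1 (c1 c2 : ℝ) (x t : ℝ) : ℂ := (x : ℂ) + 2 * Complex.I * (t : ℂ) * (sval c1 c2 : ℂ)

/-- `L2(x,t) = 2i·t·s² − x·s + 1`. -/
def L2 (c1 c2 : ℝ) (x t : ℝ) : ℂ :=
  2 * Complex.I * (t : ℂ) * (sval c1 c2 : ℂ) ^ 2 - (x : ℂ) * (sval c1 c2 : ℂ) + 1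

/-- `F1 = 4·c1·s·L1·L2`. -/
def F1 (c1 c2 : ℝ) (x t : ℝ) : ℂ :=
  4 * (c1 : ℂ) * (sval c1 c2 : ℂ) * L1 c1 c2 x t * L2 c1 c2 x t

/-- `G1 = 4·c2·s·L1·L2`. -/
def G1 (c1 c2 : ℝ) (x t : ℝ) : ℂ :=
  4 * (c2 : ℂ) * (sval c1 c2 : ℂ) * L1 c1 c2 x t * L2 c1 c2 x t

/-- `H1(x,t) = 8t²s⁴ + 2x²s² − 2xs + 1`. -/
def H1 (c1 c2 : ℝ) (x t : ℝ) : ℝ :=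
  8 * t ^ 2 * (sval c1 c2) ^ 4 + 2 * x ^ 2 * (sval c1 c2) ^ 2 - 2 * x * (sval c1 c2) + 1

/-- The first component `q1^[1](x,t) = e^{ibt}·(c1 + F1/H1)` with `b = 2(c1² + c2²)`. -/
def q1rw (c1 c2 : ℝ) (p : ℝ × ℝ) : ℂ :=
  Complex.exp (Complex.I * ((2 * (c1 ^ 2 + c2 ^ 2) : ℝ) : ℂ) * (p.2 : ℂ))
    * ((c1 : ℂ) + F1 c1 c2 p.1 p.2 / (H1 c1 c2 p.1 p.2 : ℂ))

/-- The second component `q2^[1](x,t) = e^{ibt}·(c2 + G1/H1)` with `b = 2(c1² + c2²)`. -/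
def q2rw (c1 c2 : ℝ) (p : ℝ × ℝ) : ℂ :=
  Complex.exp (Complex.I * ((2 * (c1 ^ 2 + c2 ^ 2) : ℝ) : ℂ) * (p.2 : ℂ))
    * ((c2 : ℂ) + G1 c1 c2 p.1 p.2 / (H1 c1 c2 p.1 p.2 : ℂ))

def Nf (s x t : ℝ) : ℂ :=
  1 + 2*(x:ℂ)*(s:ℂ) - 2*(x:ℂ)^2*(s:ℂ)^2 - 8*(t:ℂ)^2*(s:ℂ)^4 + 8*Complex.I*(t:ℂ)*(s:ℂ)^2

def Hf' (s x t : ℝ) : ℝ := 8*t^2*s^4 + 2*x^2*s^2 - 2*x*s + 1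

def Qf (s x t : ℝ) : ℂ :=
  Complex.exp (Complex.I*((2*s^2:ℝ):ℂ)*(t:ℂ)) * (Nf s x t / ((Hf' s x t : ℝ):ℂ))

lemma Hf'_pos (s x t : ℝ) : 0 < Hf' s x t := by
  have h1 : Hf' s x t = 8*(t*s^2)^2 + (x*s)^2 + (x*s-1)^2 := by unfold Hf'; ring
  nlinarith [sq_nonneg (t*s^2), sq_nonneg (x*s), sq_nonneg (x*s-1)]

lemma Hf'_ne (s x t : ℝ) : ((Hf' s x t : ℝ):ℂ) ≠ 0 :=
  Complex.ofReal_ne_zero.mpr (Hf'_pos s x t).ne'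

lemma hasDerivAt_coe (x : ℝ) : HasDerivAt (fun y : ℝ => (y:ℂ)) 1 x :=
  Complex.ofRealCLM.hasDerivAt

lemma hasDerivAt_linC (C0 C1 : ℂ) (x : ℝ) :
    HasDerivAt (fun y : ℝ => C0 + C1*(y:ℂ)) C1 x := by
  exact ((hasDerivAt_const x C0).add ((hasDerivAt_coe x).const_mul C1)).congr_deriv (by ring)

lemma hasDerivAt_quadC (C0 C1 C2 : ℂ) (x : ℝ) :
    HasDerivAt (fun y : ℝ => C0 + C1*(y:ℂ) + C2*(y:ℂ)^2) (C1 + 2*C2*(x:ℂ)) x := by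
  have h2 : HasDerivAt (fun y : ℝ => (y:ℂ)^2) (2*(x:ℂ)) x := by
    have h2' := (hasDerivAt_coe x).mul (hasDerivAt_coe x)
    have he : (fun y : ℝ => (y:ℂ)^2) = (fun y : ℝ => (y:ℂ)*(y:ℂ)) := by
      funext y; ring
    rw [he]; exact h2'.congr_deriv (by ring)
  have h := ((hasDerivAt_const x C0).add ((hasDerivAt_coe x).const_mul C1)).add
    (h2.const_mul C2)
  exact h.congr_deriv (by ring)

lemma hasDerivAt_Nf_x (s t x : ℝ) :
    HasDerivAt (fun y : ℝ => Nf s y t) (2*(s:ℂ) - 4*(x:ℂ)*(s:ℂ)^2) x := by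
  have he : (fun y : ℝ => Nf s y t)
      = (fun y : ℝ => (1 - 8*(t:ℂ)^2*(s:ℂ)^4 + 8*Complex.I*(t:ℂ)*(s:ℂ)^2)
          + (2*(s:ℂ))*(y:ℂ) + (-(2*(s:ℂ)^2))*(y:ℂ)^2) := by
    funext y; simp only [Nf]; ring
  rw [he]
  convert hasDerivAt_quadC _ _ _ x using 1; ring

lemma hasDerivAt_Hf_x (s t x : ℝ) :
    HasDerivAt (fun y : ℝ => ((Hf' s y t : ℝ):ℂ)) (4*(x:ℂ)*(s:ℂ)^2 - 2*(s:ℂ)) x := by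
  have he : (fun y : ℝ => ((Hf' s y t : ℝ):ℂ))
      = (fun y : ℝ => ((8*(t:ℂ)^2*(s:ℂ)^4 + 1)) + (-(2*(s:ℂ)))*(y:ℂ) + (2*(s:ℂ)^2)*(y:ℂ)^2) := by
    funext y; simp only [Hf']; push_cast; ring
  rw [he]
  convert hasDerivAt_quadC _ _ _ x using 1; ring

lemma hasDerivAt_Nf_t (s x t : ℝ) :
    HasDerivAt (fun τ : ℝ => Nf s x τ) (8*Complex.I*(s:ℂ)^2 - 16*(t:ℂ)*(s:ℂ)^4) t := by
  have he : (fun τ : ℝ => Nf s x τ)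
      = (fun τ : ℝ => (1 + 2*(x:ℂ)*(s:ℂ) - 2*(x:ℂ)^2*(s:ℂ)^2)
          + (8*Complex.I*(s:ℂ)^2)*(τ:ℂ) + (-(8*(s:ℂ)^4))*(τ:ℂ)^2) := by
    funext τ; simp only [Nf]; ring
  rw [he]
  convert hasDerivAt_quadC _ _ _ t using 1; ring

lemma hasDerivAt_Hf_t (s x t : ℝ) :
    HasDerivAt (fun τ : ℝ => ((Hf' s x τ : ℝ):ℂ)) (16*(t:ℂ)*(s:ℂ)^4) t := by
  have he : (fun τ : ℝ => ((Hf' s x τ : ℝ):ℂ))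
      = (fun τ : ℝ => ((2*(x:ℂ)^2*(s:ℂ)^2 - 2*(x:ℂ)*(s:ℂ) + 1)) + (0:ℂ)*(τ:ℂ)
          + (8*(s:ℂ)^4)*(τ:ℂ)^2) := by
    funext τ; simp only [Hf']; push_cast; ring
  rw [he]
  convert hasDerivAt_quadC _ _ _ t using 1; ring

lemma hasDerivAt_E (s t : ℝ) :
    HasDerivAt (fun τ : ℝ => Complex.exp (Complex.I*((2*s^2:ℝ):ℂ)*(τ:ℂ)))
      (Complex.I*((2*s^2:ℝ):ℂ) * Complex.exp (Complex.I*((2*s^2:ℝ):ℂ)*(t:ℂ))) t := by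
  have hlin : HasDerivAt (fun τ : ℝ => Complex.I*((2*s^2:ℝ):ℂ)*(τ:ℂ))
      (Complex.I*((2*s^2:ℝ):ℂ)) t := by
    have h := (hasDerivAt_coe t).const_mul (Complex.I*((2*s^2:ℝ):ℂ))
    rw [mul_one] at h; exact h
  have := hlin.cexp
  convert this using 1; ring

lemma deriv_Qf_t (s x t : ℝ) :
    deriv (fun τ : ℝ => Qf s x τ) t =
      (Complex.I*((2*s^2:ℝ):ℂ) * Complex.exp (Complex.I*((2*s^2:ℝ):ℂ)*(t:ℂ)))
        * (Nf s x t / ((Hf' s x t : ℝ):ℂ))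
      + Complex.exp (Complex.I*((2*s^2:ℝ):ℂ)*(t:ℂ))
        * (((8*Complex.I*(s:ℂ)^2 - 16*(t:ℂ)*(s:ℂ)^4) * ((Hf' s x t : ℝ):ℂ)
            - Nf s x t * (16*(t:ℂ)*(s:ℂ)^4)) / ((Hf' s x t : ℝ):ℂ)^2) := by
  have h := (hasDerivAt_E s t).mul
    ((hasDerivAt_Nf_t s x t).div (hasDerivAt_Hf_t s x t) (Hf'_ne s x t))
  exact h.deriv

def Ux (s x t : ℝ) : ℂ :=
  (2*(s:ℂ) - 4*(x:ℂ)*(s:ℂ)^2) * ((Hf' s x t : ℝ):ℂ) - Nf s x t * (4*(x:ℂ)*(s:ℂ)^2 - 2*(s:ℂ))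

lemma deriv_Qf_x (s t x : ℝ) :
    deriv (fun y : ℝ => Qf s y t) x =
      Complex.exp (Complex.I*((2*s^2:ℝ):ℂ)*(t:ℂ)) * (Ux s x t / ((Hf' s x t : ℝ):ℂ)^2) := by
  have h := (((hasDerivAt_Nf_x s t x).div (hasDerivAt_Hf_x s t x) (Hf'_ne s x t)).const_mul
    (Complex.exp (Complex.I*((2*s^2:ℝ):ℂ)*(t:ℂ))))
  exact h.deriv

lemma hasDerivAt_Ux (s t x : ℝ) :
    HasDerivAt (fun y : ℝ => Ux s y t)
      ((-(4*(s:ℂ)^2)) * ((Hf' s x t : ℝ):ℂ)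
        + (2*(s:ℂ) - 4*(x:ℂ)*(s:ℂ)^2) * (4*(x:ℂ)*(s:ℂ)^2 - 2*(s:ℂ))
        - ((2*(s:ℂ) - 4*(x:ℂ)*(s:ℂ)^2) * (4*(x:ℂ)*(s:ℂ)^2 - 2*(s:ℂ))
            + Nf s x t * (4*(s:ℂ)^2))) x := by
  have h1 : HasDerivAt (fun y : ℝ => 2*(s:ℂ) - 4*(y:ℂ)*(s:ℂ)^2) (-(4*(s:ℂ)^2)) x := by
    have he : (fun y : ℝ => 2*(s:ℂ) - 4*(y:ℂ)*(s:ℂ)^2)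
        = (fun y : ℝ => (2*(s:ℂ)) + (-(4*(s:ℂ)^2))*(y:ℂ)) := by funext y; ring
    rw [he]; exact hasDerivAt_linC _ _ x
  have h2 : HasDerivAt (fun y : ℝ => 4*(y:ℂ)*(s:ℂ)^2 - 2*(s:ℂ)) (4*(s:ℂ)^2) x := by
    have he : (fun y : ℝ => 4*(y:ℂ)*(s:ℂ)^2 - 2*(s:ℂ))
        = (fun y : ℝ => (-(2*(s:ℂ))) + (4*(s:ℂ)^2)*(y:ℂ)) := by funext y; ring
    rw [he]; exact hasDerivAt_linC _ _ x
  exact (h1.mul (hasDerivAt_Hf_x s t x)).sub ((hasDerivAt_Nf_x s t x).mul h2)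

lemma deriv2_Qf_x (s t x : ℝ) :
    deriv (fun x' : ℝ => deriv (fun x'' : ℝ => Qf s x'' t) x') x =
      Complex.exp (Complex.I*((2*s^2:ℝ):ℂ)*(t:ℂ)) *
        ((((-(4*(s:ℂ)^2)) * ((Hf' s x t : ℝ):ℂ)
            + (2*(s:ℂ) - 4*(x:ℂ)*(s:ℂ)^2) * (4*(x:ℂ)*(s:ℂ)^2 - 2*(s:ℂ))
            - ((2*(s:ℂ) - 4*(x:ℂ)*(s:ℂ)^2) * (4*(x:ℂ)*(s:ℂ)^2 - 2*(s:ℂ))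
                + Nf s x t * (4*(s:ℂ)^2))) * (((Hf' s x t : ℝ):ℂ)^2)
          - Ux s x t * (2 * ((Hf' s x t : ℝ):ℂ) * (4*(x:ℂ)*(s:ℂ)^2 - 2*(s:ℂ))))
          / (((Hf' s x t : ℝ):ℂ)^2)^2) := by
  have he : (fun x' : ℝ => deriv (fun x'' : ℝ => Qf s x'' t) x')
      = (fun x' : ℝ => Complex.exp (Complex.I*((2*s^2:ℝ):ℂ)*(t:ℂ))
          * (Ux s x' t / ((Hf' s x' t : ℝ):ℂ)^2)) := by
    funext x'; exact deriv_Qf_x s t x'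
  rw [he]
  have hden : HasDerivAt (fun y : ℝ => ((Hf' s y t : ℝ):ℂ)^2)
      (2 * ((Hf' s x t : ℝ):ℂ) * (4*(x:ℂ)*(s:ℂ)^2 - 2*(s:ℂ))) x := by
    have h := (hasDerivAt_Hf_x s t x).mul (hasDerivAt_Hf_x s t x)
    have he : (fun y : ℝ => ((Hf' s y t : ℝ):ℂ)^2)
        = (fun y : ℝ => ((Hf' s y t : ℝ):ℂ) * ((Hf' s y t : ℝ):ℂ)) := by
      funext y; ring
    rw [he]; exact h.congr_deriv (by ring)
  have h := (((hasDerivAt_Ux s t x).div hden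
    (pow_ne_zero 2 (Hf'_ne s x t))).const_mul
    (Complex.exp (Complex.I*((2*s^2:ℝ):ℂ)*(t:ℂ))))
  exact h.deriv

lemma normsq_Qf (s x t : ℝ) :
    ((‖Qf s x t‖:ℝ):ℂ)^2
      = Nf s x t * (starRingEnd ℂ) (Nf s x t) / ((Hf' s x t : ℝ):ℂ)^2 := by
  have h1 : ((‖Qf s x t‖:ℝ):ℂ)^2 = Qf s x t * (starRingEnd ℂ) (Qf s x t) := by
    rw [Complex.mul_conj, Complex.normSq_eq_norm_sq]
    push_cast; ring
  rw [h1]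
  simp only [Qf, map_mul, map_div₀, Complex.conj_ofReal]
  rw [← Complex.exp_conj]
  have hconj : (starRingEnd ℂ) (Complex.I*((2*s^2:ℝ):ℂ)*(t:ℂ)) = -(Complex.I*((2*s^2:ℝ):ℂ)*(t:ℂ)) := by
    simp [map_mul, map_ofNat, Complex.conj_ofReal]
  rw [hconj]
  have hEE : Complex.exp (Complex.I*((2*s^2:ℝ):ℂ)*(t:ℂ))
      * Complex.exp (-(Complex.I*((2*s^2:ℝ):ℂ)*(t:ℂ))) = 1 := by
    rw [← Complex.exp_add]; simp
  linear_combination (Nf s x t * (starRingEnd ℂ) (Nf s x t) / ((Hf' s x t : ℝ):ℂ)^2) * hEE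

lemma conj_Nf (s x t : ℝ) :
    (starRingEnd ℂ) (Nf s x t)
      = 1 + 2*(x:ℂ)*(s:ℂ) - 2*(x:ℂ)^2*(s:ℂ)^2 - 8*(t:ℂ)^2*(s:ℂ)^4 - 8*Complex.I*(t:ℂ)*(s:ℂ)^2 := by
  simp [Nf, map_add, map_sub, map_mul, map_pow, map_ofNat, Complex.conj_ofReal, Complex.conj_I]
  ring

set_option maxRecDepth 20000 in
lemma key (s x t : ℝ) :
    Complex.I * deriv (fun t' => Qf s x t') t
      + deriv (fun x' => deriv (fun x'' => Qf s x'' t) x') x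
      + 2 * (s:ℂ)^2 * ((‖Qf s x t‖:ℝ):ℂ)^2 * Qf s x t = 0 := by
  have hHex : ((Hf' s x t : ℝ):ℂ)
      = 8*(t:ℂ)^2*(s:ℂ)^4 + 2*(x:ℂ)^2*(s:ℂ)^2 - 2*(x:ℂ)*(s:ℂ) + 1 := by
    simp only [Hf']; push_cast; ring
  have hHne := Hf'_ne s x t
  rw [hHex] at hHne
  rw [deriv_Qf_t, deriv2_Qf_x, normsq_Qf, conj_Nf]
  simp only [Qf, Ux, Nf, hHex]
  have hc : ((2*s^2:ℝ):ℂ) = 2*(s:ℂ)^2 := by push_cast; ring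
  rw [hc]
  field_simp [Complex.exp_ne_zero]
  ring_nf
  simp only [Complex.I_sq, Complex.I_pow_three]
  ring_nf


lemma norm_const_mul_sq (c : ℝ) (z : ℂ) :
    ((‖(c:ℂ) * z‖:ℝ):ℂ)^2 = (c:ℂ)^2 * ((‖z‖:ℝ):ℂ)^2 := by
  rw [norm_mul, Complex.norm_real, Real.norm_eq_abs]
  push_cast
  rw [mul_pow]
  congr 1
  norm_cast
  exact sq_abs c

end

noncomputable section

lemma H1_eq (c1 c2 x t : ℝ) : H1 c1 c2 x t = Hf' (sval c1 c2) x t := rfl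

lemma frac_eq (c c1 c2 x t : ℝ) :
    (c : ℂ) + (4 * (c : ℂ) * (sval c1 c2 : ℂ) * L1 c1 c2 x t * L2 c1 c2 x t)
        / ((H1 c1 c2 x t : ℝ) : ℂ)
      = (c : ℂ) * (Nf (sval c1 c2) x t / ((Hf' (sval c1 c2) x t : ℝ) : ℂ)) := by
  have hH := Hf'_ne (sval c1 c2) x t
  rw [H1_eq]
  have hNN : ((Hf' (sval c1 c2) x t : ℝ) : ℂ)
        + 4 * ((sval c1 c2 : ℝ) : ℂ) * L1 c1 c2 x t * L2 c1 c2 x t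
      = Nf (sval c1 c2) x t := by
    simp only [L1, L2, Nf, Hf']
    push_cast
    linear_combination (16 * (t:ℂ)^2 * ((sval c1 c2 : ℝ):ℂ)^4) * Complex.I_sq
  field_simp
  linear_combination (c : ℂ) * hNN

lemma q1rw_eq (c1 c2 x t : ℝ) :
    q1rw c1 c2 (x, t) = (c1 : ℂ) * Qf (sval c1 c2) x t := by
  have hexp : ((2 * (c1 ^ 2 + c2 ^ 2) : ℝ) : ℂ) = ((2 * (sval c1 c2) ^ 2 : ℝ) : ℂ) := by
    have : (sval c1 c2) ^ 2 = c1 ^ 2 + c2 ^ 2 := Real.sq_sqrt (by positivity)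
    rw [this]
  simp only [q1rw, Qf, F1]
  rw [hexp, frac_eq c1 c1 c2 x t]
  ring

lemma q2rw_eq (c1 c2 x t : ℝ) :
    q2rw c1 c2 (x, t) = (c2 : ℂ) * Qf (sval c1 c2) x t := by
  have hexp : ((2 * (c1 ^ 2 + c2 ^ 2) : ℝ) : ℂ) = ((2 * (sval c1 c2) ^ 2 : ℝ) : ℂ) := by
    have : (sval c1 c2) ^ 2 = c1 ^ 2 + c2 ^ 2 := Real.sq_sqrt (by positivity)
    rw [this]
  simp only [q2rw, Qf, G1]
  rw [hexp, frac_eq c2 c1 c2 x t]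
  ring

/-- the pair `(q1^[1], q2^[1])` is the first-order vector rogue wave of the
Manakov system: it solves the Manakov system on all of `ℝ²` and satisfies
`q1^[1]·c2 = q2^[1]·c1`. -/
theorem first_order_rogue_wave_solves_manakov (c1 c2 : ℝ)
    (hs : Real.sqrt (c1 ^ 2 + c2 ^ 2) > 0) :
    Manakov (q1rw c1 c2) (q2rw c1 c2) ∧
    ∀ p : ℝ × ℝ, q1rw c1 c2 p * (c2 : ℂ) = q2rw c1 c2 p * (c1 : ℂ) := by
  have hs2 : ((sval c1 c2 : ℝ) : ℂ) ^ 2 = (c1 : ℂ) ^ 2 + (c2 : ℂ) ^ 2 := by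
    have : (sval c1 c2) ^ 2 = c1 ^ 2 + c2 ^ 2 := Real.sq_sqrt (by positivity)
    exact_mod_cast this
  have main : ∀ c : ℝ, ∀ x t : ℝ,
      Complex.I * deriv (fun t' => (c : ℂ) * Qf (sval c1 c2) x t') t
        + deriv (fun x' => deriv (fun x'' => (c : ℂ) * Qf (sval c1 c2) x'' t) x') x
        + 2 * (((c1:ℂ)^2 + (c2:ℂ)^2) * ((‖Qf (sval c1 c2) x t‖ : ℝ) : ℂ) ^ 2)
          * ((c : ℂ) * Qf (sval c1 c2) x t) = 0 := by
    intro c x t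
    simp only [deriv_const_mul_field]
    linear_combination (c : ℂ) * key (sval c1 c2) x t
      - 2 * (c : ℂ) * ((‖Qf (sval c1 c2) x t‖ : ℝ) : ℂ) ^ 2 * Qf (sval c1 c2) x t * hs2
  refine ⟨⟨fun x t => ?_, fun x t => ?_⟩, fun p => ?_⟩
  · simp only [q1rw_eq, q2rw_eq, norm_const_mul_sq]
    have := main c1 x t
    linear_combination this
  · simp only [q1rw_eq, q2rw_eq, norm_const_mul_sq]
    have := main c2 x t
    linear_combination this
  · simp only [q1rw, q2rw, F1, G1]
    ring

end
end
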